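/- Let X_1, …, X_n be independent Bernoulli random variables with success probabilities p_1, …, p_n. Then E[|Σ_{i=1}^n (X_i − p_i)|³] ≤ 2 Σ_{i=1}^n p_i + 2 (Σ_{i=1}^n p_i)^{3/2}. -/

import Mathlib

open MeasureTheory Finset

noncomputable section

namespace Stmt11Aux

def W {n : ℕ} (p : Fin n → ℝ) (x : Fin n → Bool) : ℝ := ∏ i, if x i then p i else 1 - p i
def S {n : ℕ} (p : Fin n → ℝ) (x : Fin n → Bool) : ℝ := ∑ i, ((if x i then (1:ℝ) else 0) - p i)
def A {n : ℕ} (p : Fin n → ℝ) : ℝ := ∑ i, p i * (1 - p i)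

lemma pi_succ_sum {n : ℕ} (g : (Fin (n+1) → Bool) → ℝ) :
    ∑ x : Fin (n+1) → Bool, g x = ∑ b : Bool, ∑ y : Fin n → Bool, g (Fin.cons b y) := by
  calc ∑ x : Fin (n+1) → Bool, g x
      = ∑ z : Bool × (Fin n → Bool), g (Fin.cons z.1 z.2) := by
        refine Fintype.sum_equiv (Fin.consEquiv (fun _ => Bool)).symm _ _ (fun x => ?_)
        simp only [Fin.consEquiv, Equiv.coe_fn_symm_mk]
        congr 1
        exact (Fin.cons_self_tail x).symm
    _ = ∑ b : Bool, ∑ y : Fin n → Bool, g (Fin.cons b y) := Fintype.sum_prod_type _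

lemma W_cons {n : ℕ} (p : Fin (n+1) → ℝ) (b : Bool) (y : Fin n → Bool) :
    W p (Fin.cons b y) = (if b then p 0 else 1 - p 0) * W (fun i => p i.succ) y := by
  rw [W, Fin.prod_univ_succ]
  simp [W]

lemma S_cons {n : ℕ} (p : Fin (n+1) → ℝ) (b : Bool) (y : Fin n → Bool) :
    S p (Fin.cons b y) = ((if b then (1:ℝ) else 0) - p 0) + S (fun i => p i.succ) y := by
  rw [S, Fin.sum_univ_succ]
  simp [S]

lemma A_succ {n : ℕ} (p : Fin (n+1) → ℝ) :
    A p = p 0 * (1 - p 0) + A (fun i => p i.succ) := by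
  rw [A, Fin.sum_univ_succ]; rfl

lemma W_nonneg {n : ℕ} {p : Fin n → ℝ} (hp0 : ∀ i, 0 ≤ p i) (hp1 : ∀ i, p i ≤ 1)
    (x : Fin n → Bool) : 0 ≤ W p x :=
  Finset.prod_nonneg fun i _ => by
    by_cases h : x i <;> simp [h] <;> [skip; linarith [hp1 i]]
    exact hp0 i

lemma key : ∀ (n : ℕ) (p : Fin n → ℝ), (∀ i, 0 ≤ p i) → (∀ i, p i ≤ 1) →
    (∑ x : Fin n → Bool, W p x) = 1 ∧
    (∑ x : Fin n → Bool, W p x * S p x) = 0 ∧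
    (∑ x : Fin n → Bool, W p x * S p x ^ 2) = A p ∧
    (∑ x : Fin n → Bool, W p x * S p x ^ 4) ≤ A p + 3 * A p ^ 2 := by
  intro n
  induction n with
  | zero =>
    intro p _ _
    simp [W, S, A]
  | succ n ih =>
    intro p hp0 hp1
    set q : Fin n → ℝ := fun i => p i.succ with hq
    obtain ⟨h0, h1, h2, h4⟩ := ih q (fun i => hp0 i.succ) (fun i => hp1 i.succ)
    set t := p 0 with ht
    have ht0 : 0 ≤ t := hp0 0
    have ht1 : t ≤ 1 := hp1 0
    have hAq : 0 ≤ A q :=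
      Finset.sum_nonneg fun i _ => mul_nonneg (hp0 i.succ) (by linarith [hp1 i.succ])
    set e3 := ∑ y : Fin n → Bool, W q y * S q y ^ 3 with he3
    set e4 := ∑ y : Fin n → Bool, W q y * S q y ^ 4 with he4
    have E1 : ∀ c : ℝ, (∑ y : Fin n → Bool, W q y * (c + S q y) ^ 1) = c := by
      intro c
      have : ∑ y : Fin n → Bool, W q y * (c + S q y) ^ 1
          = c * (∑ y : Fin n → Bool, W q y) + (∑ y : Fin n → Bool, W q y * S q y) := by
        rw [Finset.mul_sum, ← Finset.sum_add_distrib]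
        exact Finset.sum_congr rfl fun y _ => by ring
      rw [this, h0, h1]; ring
    have E2 : ∀ c : ℝ, (∑ y : Fin n → Bool, W q y * (c + S q y) ^ 2) = c ^ 2 + A q := by
      intro c
      have : ∑ y : Fin n → Bool, W q y * (c + S q y) ^ 2
          = c ^ 2 * (∑ y : Fin n → Bool, W q y)
            + 2 * c * (∑ y : Fin n → Bool, W q y * S q y)
            + (∑ y : Fin n → Bool, W q y * S q y ^ 2) := by
        rw [Finset.mul_sum, Finset.mul_sum, ← Finset.sum_add_distrib, ← Finset.sum_add_distrib]
        exact Finset.sum_congr rfl fun y _ => by ring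
      rw [this, h0, h1, h2]; ring
    have E4 : ∀ c : ℝ, (∑ y : Fin n → Bool, W q y * (c + S q y) ^ 4)
        = c ^ 4 + 6 * c ^ 2 * A q + 4 * c * e3 + e4 := by
      intro c
      have : ∑ y : Fin n → Bool, W q y * (c + S q y) ^ 4
          = c ^ 4 * (∑ y : Fin n → Bool, W q y)
            + 4 * c ^ 3 * (∑ y : Fin n → Bool, W q y * S q y)
            + 6 * c ^ 2 * (∑ y : Fin n → Bool, W q y * S q y ^ 2)
            + 4 * c * e3 + e4 := by
        rw [he3, he4, Finset.mul_sum, Finset.mul_sum, Finset.mul_sum, Finset.mul_sum,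
          ← Finset.sum_add_distrib, ← Finset.sum_add_distrib, ← Finset.sum_add_distrib,
          ← Finset.sum_add_distrib]
        exact Finset.sum_congr rfl fun y _ => by ring
      rw [this, h0, h1, h2]; ring
    have split : ∀ (k : ℕ), ∑ x : Fin (n+1) → Bool, W p x * S p x ^ k
        = t * (∑ y : Fin n → Bool, W q y * ((1 - t) + S q y) ^ k)
          + (1 - t) * (∑ y : Fin n → Bool, W q y * ((0 - t) + S q y) ^ k) := by
      intro k
      rw [pi_succ_sum (fun x => W p x * S p x ^ k), Fintype.sum_bool]
      congr 1
      · rw [Finset.mul_sum]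
        refine Finset.sum_congr rfl fun y _ => ?_
        rw [W_cons, S_cons]
        norm_num
        ring
      · rw [Finset.mul_sum]
        refine Finset.sum_congr rfl fun y _ => ?_
        rw [W_cons, S_cons]
        norm_num
        ring
    have splitW : ∑ x : Fin (n+1) → Bool, W p x
        = t * (∑ y : Fin n → Bool, W q y) + (1 - t) * (∑ y : Fin n → Bool, W q y) := by
      rw [pi_succ_sum (fun x => W p x), Fintype.sum_bool]
      congr 1
      · rw [Finset.mul_sum]
        exact Finset.sum_congr rfl fun y _ => by rw [W_cons]; simp; rfl
      · rw [Finset.mul_sum]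
        exact Finset.sum_congr rfl fun y _ => by rw [W_cons]; simp; rfl
    refine ⟨?_, ?_, ?_, ?_⟩
    · rw [splitW, h0]; ring
    · rw [show (fun x => W p x * S p x) = (fun x => W p x * S p x ^ 1) by funext x; ring,
        split 1, E1, E1]
      ring
    · rw [split 2, E2, E2, A_succ]
      ring
    · rw [split 4, E4, E4, A_succ]
      nlinarith [h4, mul_nonneg ht0 (by linarith : (0:ℝ) ≤ 1 - t), sq_nonneg (A q),
        sq_nonneg t, sq_nonneg (1-t), mul_nonneg (mul_nonneg ht0 ht0) hAq,
        mul_nonneg hAq hAq, sq_nonneg (t*(1-t))]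

lemma main_real {n : ℕ} (p : Fin n → ℝ) (hp0 : ∀ i, 0 ≤ p i) (hp1 : ∀ i, p i ≤ 1) :
    (∑ x : Fin n → Bool, W p x * |S p x| ^ 3)
      ≤ 2 * (∑ i, p i) + 2 * (∑ i, p i) ^ ((3:ℝ)/2) := by
  obtain ⟨h0, h1, h2, h4⟩ := key n p hp0 hp1
  set m := ∑ i, p i with hm
  have hm0 : 0 ≤ m := Finset.sum_nonneg fun i _ => hp0 i
  have hA0 : 0 ≤ A p := Finset.sum_nonneg fun i _ =>
    mul_nonneg (hp0 i) (by linarith [hp1 i])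
  have hAm : A p ≤ m := Finset.sum_le_sum fun i _ => by nlinarith [hp0 i, hp1 i]
  set T := ∑ x : Fin n → Bool, W p x * |S p x| ^ 3 with hT
  have hT0 : 0 ≤ T := Finset.sum_nonneg fun x _ =>
    mul_nonneg (W_nonneg hp0 hp1 x) (by positivity)
  have cs := Finset.sum_mul_sq_le_sq_mul_sq Finset.univ
    (fun x : Fin n → Bool => Real.sqrt (W p x) * |S p x|)
    (fun x : Fin n → Bool => Real.sqrt (W p x) * S p x ^ 2)
  have e1 : ∑ x : Fin n → Bool,
      (Real.sqrt (W p x) * |S p x|) * (Real.sqrt (W p x) * S p x ^ 2) = T := by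
    refine Finset.sum_congr rfl fun x _ => ?_
    have h1 : Real.sqrt (W p x) * Real.sqrt (W p x) = W p x :=
      Real.mul_self_sqrt (W_nonneg hp0 hp1 x)
    have h2' : |S p x| * S p x ^ 2 = |S p x| ^ 3 := by
      rw [← sq_abs]; ring
    calc (Real.sqrt (W p x) * |S p x|) * (Real.sqrt (W p x) * S p x ^ 2)
        = (Real.sqrt (W p x) * Real.sqrt (W p x)) * (|S p x| * S p x ^ 2) := by ring
      _ = W p x * |S p x| ^ 3 := by rw [h1, h2']
  have e2 : ∑ x : Fin n → Bool, (Real.sqrt (W p x) * |S p x|) ^ 2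
      = ∑ x : Fin n → Bool, W p x * S p x ^ 2 := by
    refine Finset.sum_congr rfl fun x _ => ?_
    rw [mul_pow, Real.sq_sqrt (W_nonneg hp0 hp1 x), sq_abs]
  have e3 : ∑ x : Fin n → Bool, (Real.sqrt (W p x) * S p x ^ 2) ^ 2
      = ∑ x : Fin n → Bool, W p x * S p x ^ 4 := by
    refine Finset.sum_congr rfl fun x _ => ?_
    rw [mul_pow, Real.sq_sqrt (W_nonneg hp0 hp1 x)]
    ring
  rw [e1, e2, e3, h2] at cs
  have hTsq : T ^ 2 ≤ m ^ 2 + 3 * m ^ 3 := by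
    have c2 : A p ^ 2 ≤ m ^ 2 := pow_le_pow_left₀ hA0 hAm 2
    have c3 : A p ^ 3 ≤ m ^ 3 := pow_le_pow_left₀ hA0 hAm 3
    have : A p * (A p + 3 * A p ^ 2) ≤ m ^ 2 + 3 * m ^ 3 := by nlinarith
    nlinarith [mul_le_mul_of_nonneg_left h4 hA0]
  set r := m ^ ((3:ℝ)/2) with hr
  have hr0 : 0 ≤ r := Real.rpow_nonneg hm0 _
  have hr2 : r ^ 2 = m ^ 3 := by
    rw [hr, ← Real.rpow_natCast (m ^ ((3:ℝ)/2)) 2, ← Real.rpow_mul hm0]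
    norm_num
  have hfin : T ^ 2 ≤ (2 * m + 2 * r) ^ 2 := by nlinarith [mul_nonneg hm0 hr0]
  have hs := Real.sqrt_le_sqrt hfin
  rwa [Real.sqrt_sq hT0, Real.sqrt_sq (by positivity)] at hs

end Stmt11Aux

open Stmt11Aux in
/-- Lemma `PB3`: For independent Bernoulli random variables
`X₁, …, Xₙ` with success probabilities `p₁, …, pₙ`,
`E[|Σᵢ (Xᵢ − pᵢ)|³] ≤ 2 Σᵢ pᵢ + 2 (Σᵢ pᵢ)^{3/2}`. -/
theorem stmt11 {Ω : Type} [MeasurableSpace Ω] (P : Measure Ω) [IsProbabilityMeasure P]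
    (n : ℕ) (X : Fin n → Ω → Bool) (p : Fin n → ℝ)
    (hp0 : ∀ i, 0 ≤ p i) (hp1 : ∀ i, p i ≤ 1)
    (hlaw : ∀ x : Fin n → Bool,
      P {ω | ∀ i, X i ω = x i} = ENNReal.ofReal (∏ i, if x i then p i else 1 - p i)) :
    ∫⁻ ω, ENNReal.ofReal (|∑ i, ((if X i ω then (1:ℝ) else 0) - p i)| ^ 3) ∂P
      ≤ ENNReal.ofReal (2 * ∑ i, p i + 2 * (∑ i, p i) ^ ((3:ℝ)/2)) := by
  classical
  set F : (Fin n → Bool) → ENNReal := fun x => ENNReal.ofReal (|S p x| ^ 3) with hF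
  have hpoint : ∀ ω, ENNReal.ofReal (|∑ i, ((if X i ω then (1:ℝ) else 0) - p i)| ^ 3)
      ≤ ∑ x : Fin n → Bool,
          (toMeasurable P {ω' | ∀ i, X i ω' = x i}).indicator (fun _ => F x) ω := by
    intro ω
    set x0 : Fin n → Bool := fun i => X i ω with hx0
    have hmem : ω ∈ toMeasurable P {ω' | ∀ i, X i ω' = x0 i} :=
      subset_toMeasurable _ _ (fun i => rfl)
    have heq : (toMeasurable P {ω' | ∀ i, X i ω' = x0 i}).indicator
        (fun _ => F x0) ω = F x0 := Set.indicator_of_mem hmem _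
    have hle : (toMeasurable P {ω' | ∀ i, X i ω' = x0 i}).indicator (fun _ => F x0) ω
        ≤ ∑ x : Fin n → Bool,
            (toMeasurable P {ω' | ∀ i, X i ω' = x i}).indicator (fun _ => F x) ω :=
      Finset.single_le_sum (f := fun x =>
        (toMeasurable P {ω' | ∀ i, X i ω' = x i}).indicator (fun _ => F x) ω)
        (fun x _ => zero_le) (Finset.mem_univ x0)
    calc ENNReal.ofReal (|∑ i, ((if X i ω then (1:ℝ) else 0) - p i)| ^ 3)
        = F x0 := rfl
      _ = _ := heq.symm
      _ ≤ _ := hle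
  refine le_trans (lintegral_mono hpoint) ?_
  rw [lintegral_finset_sum _ (fun x _ =>
    (measurable_const.indicator (measurableSet_toMeasurable P _)))]
  have hint : ∀ x : Fin n → Bool,
      ∫⁻ ω, (toMeasurable P {ω' | ∀ i, X i ω' = x i}).indicator (fun _ => F x) ω ∂P
        = F x * ENNReal.ofReal (W p x) := by
    intro x
    rw [lintegral_indicator_const (measurableSet_toMeasurable _ _),
      measure_toMeasurable, hlaw x]
    rfl
  rw [Finset.sum_congr rfl (fun x _ => hint x)]
  have hsum : ∑ x : Fin n → Bool, F x * ENNReal.ofReal (W p x)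
      = ENNReal.ofReal (∑ x : Fin n → Bool, W p x * |S p x| ^ 3) := by
    rw [ENNReal.ofReal_sum_of_nonneg (fun x _ =>
      mul_nonneg (W_nonneg hp0 hp1 x) (by positivity))]
    refine Finset.sum_congr rfl fun x _ => ?_
    rw [ENNReal.ofReal_mul (W_nonneg hp0 hp1 x), mul_comm]
  rw [hsum]
  exact ENNReal.ofReal_le_ofReal (main_real p hp0 hp1)
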